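/- Exact Kullback–Leibler divergence of the uniform restriction to a weighted-ℓ1 ball of functions. Fix I ⊆ {1,…,p}, an integer 1 ≤ M ≤ n, and γ ∈ (0, 1/n]. For f = Σ_{j=1}^M β_j φ_j ∈ F_M(C+1), set ‖f‖_M = Σ_{j=1}^M j|β_j|. Let f*_{I,M} ∈ F_M(C) and let ρ²_{I,M,γ} be the probability measure with density with respect to ν_M proportional to the indicator 1[‖f − f*_{I,M}‖_M ≤ γ]. Then K(ρ²_{I,M,γ}, ν_M) = M · log( (C+1)/γ ). -/

import Mathlib

open MeasureTheory Finset Set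
open Pointwise ENNReal

/-- The coefficient set `B_M(Λ) = {β ∈ ℝ^M : ∑_{j=1}^M j |β_j| ≤ Λ, β_M ≠ 0}`
(indices `j : Fin M` carry weight `j + 1`). -/
def BMset (M : ℕ) (Λ : ℝ) : Set (Fin M → ℝ) :=
  {β | (∑ j : Fin M, ((j.1 : ℝ) + 1) * |β j| ≤ Λ) ∧
    ∀ h : 0 < M, β ⟨M - 1, Nat.sub_lt h Nat.one_pos⟩ ≠ 0}

/-- The map `Φ_M : β ↦ ∑_{j=1}^M β_j φ_j`. -/
def PhiM (φ : ℕ → ℝ → ℝ) (M : ℕ) (β : Fin M → ℝ) : ℝ → ℝ :=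
  fun t => ∑ j : Fin M, β j * φ (j.1 + 1) t

/-- The prior component `ν_M`: image under `Φ_M` of the uniform (normalized Lebesgue)
probability measure on `B_M(C+1)`. -/
noncomputable def nuM (φ : ℕ → ℝ → ℝ) (M : ℕ) (C : ℝ) : Measure (ℝ → ℝ) :=
  Measure.map (PhiM φ M)
    ((volume (BMset M (C + 1)))⁻¹ • volume.restrict (BMset M (C + 1)))

/-- The Kullback–Leibler divergence, as an extended real: `∫ log (dm/dμ) dm` if `m ≪ μ`
(with value `+∞` if the integral diverges), and `+∞` otherwise. -/
noncomputable def klDivE {E : Type*} [MeasurableSpace E] (m μ : Measure E) : EReal :=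
  open Classical in
  if m ≪ μ ∧ Integrable (llr m μ) m then ((∫ x, llr m μ x ∂m : ℝ) : EReal) else ⊤


lemma exists_eval_inj (φ : ℕ → ℝ → ℝ) (M : ℕ) (hΦinj : Function.Injective (PhiM φ M)) :
    ∃ x : Fin M → ℝ, Function.Injective
      (fun β : Fin M → ℝ => fun i : Fin M => ∑ j : Fin M, β j * φ (j.1 + 1) (x i)) := by
  classical
  set v : ℝ → (Fin M → ℝ) := fun t j => φ (j.1 + 1) t with hv
  have hsingle : ∀ y : Fin M → ℝ, ∑ j : Fin M, (y j) • (Pi.single j 1 : Fin M → ℝ) = y := by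
    intro y
    funext k
    simp [Finset.sum_apply, Pi.single_apply, smul_eq_mul, mul_ite]
  have hspan : Submodule.span ℝ (Set.range v) = ⊤ := by
    by_contra h
    obtain ⟨f, hf0, hfbot⟩ := Submodule.exists_dual_map_eq_bot_of_lt_top
      (p := Submodule.span ℝ (Set.range v)) (lt_top_iff_ne_top.2 h) inferInstance
    set c : Fin M → ℝ := fun j => f (Pi.single j 1) with hc
    have hfv : ∀ t, f (v t) = 0 := by
      intro t
      have : f (v t) ∈ (Submodule.span ℝ (Set.range v)).map f :=
        Submodule.mem_map_of_mem (Submodule.subset_span ⟨t, rfl⟩)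
      rw [hfbot] at this
      simpa using this
    have hrepr : ∀ y : Fin M → ℝ, f y = ∑ j : Fin M, y j * c j := by
      intro y
      calc f y = f (∑ j : Fin M, y j • (Pi.single j 1 : Fin M → ℝ)) := by rw [hsingle]
        _ = ∑ j : Fin M, y j * c j := by simp [map_sum, hc, smul_eq_mul]
    have hΦc : PhiM φ M c = PhiM φ M 0 := by
      funext t
      have h1 := hfv t
      rw [hrepr (v t)] at h1
      simp only [PhiM]
      rw [show (∑ j : Fin M, c j * φ (j.1+1) t) = ∑ j : Fin M, v t j * c j by
        simp [hv, mul_comm]]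
      simp [h1]
    have hc0 : c = 0 := hΦinj hΦc
    refine hf0 (LinearMap.ext fun y => ?_)
    rw [hrepr y, hc0]
    simp
  obtain ⟨b, hbsub, hbspan, hbli⟩ := exists_linearIndependent ℝ (Set.range v)
  rw [hspan] at hbspan
  have hbfin : b.Finite := hbli.setFinite
  haveI := hbfin.fintype
  have hbasis : Module.Basis b ℝ (Fin M → ℝ) := Module.Basis.mk hbli (by rw [Subtype.range_coe, hbspan])
  have hcard : Fintype.card b = M := by
    have := Module.finrank_eq_card_basis hbasis
    rw [Module.finrank_fin_fun] at this
    omega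
  obtain ⟨e⟩ : Nonempty (Fin M ≃ b) := ⟨(Fintype.equivFinOfCardEq hcard).symm⟩
  choose x hx using fun i : Fin M => hbsub (e i).2
  refine ⟨x, ?_⟩
  have key : ∀ β : Fin M → ℝ, (∀ i, ∑ j : Fin M, β j * φ (j.1+1) (x i) = 0) → β = 0 := by
    intro β hβ
    set g : (Fin M → ℝ) →ₗ[ℝ] ℝ := ∑ j : Fin M, β j • LinearMap.proj j with hg
    have hgapp : ∀ w : Fin M → ℝ, g w = ∑ j : Fin M, β j * w j := by
      intro w; simp [hg, LinearMap.sum_apply, smul_eq_mul]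
    have hrange : (Set.range fun i : Fin M => v (x i)) = b := by
      ext y
      constructor
      · rintro ⟨i, rfl⟩
        show v (x i) ∈ b
        rw [hx i]; exact (e i).2
      · intro hy
        refine ⟨e.symm ⟨y, hy⟩, ?_⟩
        show v (x (e.symm ⟨y, hy⟩)) = y
        rw [hx]; simp
    have hspan' : Submodule.span ℝ (Set.range fun i : Fin M => v (x i)) = ⊤ := by
      rw [hrange, hbspan]
    have hg0 : g = 0 := by
      apply LinearMap.ext_on hspan'
      rintro w ⟨i, rfl⟩
      show g (v (x i)) = 0
      rw [hgapp]
      simpa [hv] using hβ i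
    have hsq : ∑ j : Fin M, β j * β j = 0 := by
      have hb2 := LinearMap.congr_fun hg0 β
      rw [hgapp] at hb2
      simpa using hb2
    funext j
    have hnn : ∀ j ∈ Finset.univ, 0 ≤ β j * β j := fun j _ => mul_self_nonneg _
    have := (Finset.sum_eq_zero_iff_of_nonneg hnn).1 hsq j (Finset.mem_univ j)
    exact mul_self_eq_zero.1 this
  intro β₁ β₂ h12
  have hker : β₁ - β₂ = 0 := by
    apply key
    intro i
    have h3 := congrFun h12 i
    simp only at h3
    simp only [Pi.sub_apply, sub_mul, Finset.sum_sub_distrib]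
    rw [h3, sub_self]
  exact sub_eq_zero.1 hker
lemma wball_eq (M : ℕ) (c : Fin M → ℝ) (r : ℝ) (hr : 0 < r) :
    {β : Fin M → ℝ | ∑ j : Fin M, ((j.1 : ℝ) + 1) * |β j - c j| ≤ r}
      = (fun β => β + (-c)) ⁻¹'
        ((r • ({β : Fin M → ℝ | ∑ j : Fin M, ((j.1 : ℝ) + 1) * |β j| ≤ 1}
          : Set (Fin M → ℝ))) : Set (Fin M → ℝ)) := by
  ext β
  simp only [Set.mem_preimage, Set.mem_setOf_eq]
  rw [Set.mem_smul_set_iff_inv_smul_mem₀ hr.ne']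
  simp only [Set.mem_setOf_eq, Pi.smul_apply, Pi.add_apply, Pi.neg_apply, smul_eq_mul,
    abs_mul, abs_inv, abs_of_pos hr]
  have h1 : ∀ j : Fin M, ((j.1 : ℝ) + 1) * (r⁻¹ * |β j + -c j|)
      = r⁻¹ * (((j.1 : ℝ) + 1) * |β j - c j|) := by
    intro j; rw [sub_eq_add_neg]; ring
  rw [Finset.sum_congr rfl (fun j _ => h1 j), ← Finset.mul_sum,
    inv_mul_le_iff₀ hr, mul_one]

lemma vol_wball (M : ℕ) (c : Fin M → ℝ) (r : ℝ) (hr : 0 < r) :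
    volume {β : Fin M → ℝ | ∑ j : Fin M, ((j.1 : ℝ) + 1) * |β j - c j| ≤ r}
      = ENNReal.ofReal (r ^ M) *
        volume {β : Fin M → ℝ | ∑ j : Fin M, ((j.1 : ℝ) + 1) * |β j| ≤ 1} := by
  rw [wball_eq M c r hr, measure_preimage_add_right, Measure.addHaar_smul,
    Module.finrank_fin_fun, abs_pow, abs_of_pos hr]

lemma vol_unit_pos (M : ℕ) (hM : 1 ≤ M) :
    0 < volume {β : Fin M → ℝ | ∑ j : Fin M, ((j.1 : ℝ) + 1) * |β j| ≤ 1} := by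
  set ε : ℝ := ((M : ℝ) * ((M : ℝ) + 1))⁻¹ with hε
  have hMpos : (0:ℝ) < M := by exact_mod_cast hM
  have hεpos : 0 < ε := by positivity
  have hsub : (Set.pi Set.univ fun _ : Fin M => Icc (-ε) ε) ⊆
      {β : Fin M → ℝ | ∑ j : Fin M, ((j.1 : ℝ) + 1) * |β j| ≤ 1} := by
    intro β hβ
    simp only [Set.mem_pi, Set.mem_univ, forall_true_left, Set.mem_Icc] at hβ
    have hterm : ∀ j : Fin M, ((j.1 : ℝ) + 1) * |β j| ≤ (M : ℝ) * ε := by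
      intro j
      have h1 : ((j.1 : ℝ) + 1) ≤ (M : ℝ) := by
        have := j.2; exact_mod_cast Nat.succ_le_of_lt this
      have h2 : |β j| ≤ ε := abs_le.2 (hβ j)
      exact mul_le_mul h1 h2 (abs_nonneg _) (by positivity)
    calc ∑ j : Fin M, ((j.1 : ℝ) + 1) * |β j| ≤ ∑ _j : Fin M, (M : ℝ) * ε :=
          Finset.sum_le_sum fun j _ => hterm j
      _ = (M : ℝ) * ((M : ℝ) * ε) := by rw [Finset.sum_const]; simp [mul_assoc]
      _ ≤ 1 := by
          rw [hε, show (M:ℝ)*((M:ℝ)*((M:ℝ)*((M:ℝ)+1))⁻¹)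
              = ((M:ℝ)*(M:ℝ))/((M:ℝ)*((M:ℝ)+1)) from by ring,
            div_le_one (by positivity)]
          nlinarith
  refine lt_of_lt_of_le ?_ (measure_mono hsub)
  rw [volume_pi_pi]
  rw [Finset.prod_const, Real.volume_Icc]
  exact ENNReal.pow_pos (ENNReal.ofReal_pos.2 (by linarith)) _

lemma vol_unit_lt_top (M : ℕ) :
    volume {β : Fin M → ℝ | ∑ j : Fin M, ((j.1 : ℝ) + 1) * |β j| ≤ 1} < ⊤ := by
  have hsub : {β : Fin M → ℝ | ∑ j : Fin M, ((j.1 : ℝ) + 1) * |β j| ≤ 1} ⊆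
      Set.pi Set.univ fun _ : Fin M => Icc (-1 : ℝ) 1 := by
    intro β hβ
    simp only [Set.mem_setOf_eq] at hβ
    intro j _
    have h1 : |β j| ≤ ((j.1 : ℝ) + 1) * |β j| := by
      nlinarith [abs_nonneg (β j), (by positivity : (0:ℝ) ≤ (j.1:ℝ))]
    have h2 : ((j.1 : ℝ) + 1) * |β j| ≤ 1 := by
      refine le_trans ?_ hβ
      exact Finset.single_le_sum (f := fun k : Fin M => ((k.1:ℝ)+1) * |β k|)
        (fun k _ => by positivity) (Finset.mem_univ j)
    exact Set.mem_Icc.2 (abs_le.1 (h1.trans h2))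
  refine lt_of_le_of_lt (measure_mono hsub) ?_
  rw [volume_pi_pi]
  simp [Real.volume_Icc]

lemma vol_hyperplane (M : ℕ) (j₀ : Fin M) :
    volume {β : Fin M → ℝ | β j₀ = 0} = 0 := by
  have hset : {β : Fin M → ℝ | β j₀ = 0}
      = (LinearMap.ker (LinearMap.proj (R := ℝ) (φ := fun _ : Fin M => ℝ) j₀) : Set (Fin M → ℝ)) := by
    ext β; simp [LinearMap.mem_ker]
  rw [hset]
  apply Measure.addHaar_submodule
  intro h
  have hmem : Pi.single j₀ (1:ℝ) ∈ LinearMap.ker (LinearMap.proj (R := ℝ) (φ := fun _ : Fin M => ℝ) j₀) := by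
    rw [h]; trivial
  simp [LinearMap.mem_ker] at hmem

/-- **Exact Kullback–Leibler divergence of the uniform restriction to a weighted-ℓ1 ball of
functions.** For `γ ∈ (0, 1/n]` and `f*_{I,M} = Φ_M β* ∈ F_M(C)`, the normalized
restriction `ρ²_{I,M,γ}` of `ν_M` to `{f : ‖f − f*_{I,M}‖_M ≤ γ}` (the image under the
injective map `Φ_M` of the weighted-ℓ1 ball of radius `γ` around `β*`) satisfies
`K(ρ²_{I,M,γ}, ν_M) = M log ((C+1)/γ)`. -/
theorem kl_uniform_restriction_function_ball
    (p n : ℕ) (hn : 1 ≤ n) (I : Finset (Fin p))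
    (M : ℕ) (hM1 : 1 ≤ M) (hMn : M ≤ n)
    (C : ℝ) (hC : 1 ≤ C) (γ : ℝ) (hγ : 0 < γ) (hγ' : γ ≤ 1 / n)
    (φ : ℕ → ℝ → ℝ) (hφmeas : ∀ j, Measurable (φ j))
    (hΦinj : Function.Injective (PhiM φ M))
    (βstar : Fin M → ℝ)
    (hβstarC : ∑ j : Fin M, ((j.1 : ℝ) + 1) * |βstar j| ≤ C)
    (hβstarM : ∀ h : 0 < M, βstar ⟨M - 1, Nat.sub_lt h Nat.one_pos⟩ ≠ 0) :
    klDivE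
        (((nuM φ M C)
            (PhiM φ M ''
              {β : Fin M → ℝ | ∑ j : Fin M, ((j.1 : ℝ) + 1) * |β j - βstar j| ≤ γ}))⁻¹ •
          (nuM φ M C).restrict
            (PhiM φ M ''
              {β : Fin M → ℝ | ∑ j : Fin M, ((j.1 : ℝ) + 1) * |β j - βstar j| ≤ γ}))
        (nuM φ M C) =
      (((M : ℝ) * Real.log ((C + 1) / γ) : ℝ) : EReal) := by
  classical
  have hM0 : 0 < M := hM1
  set ball : Set (Fin M → ℝ) :=
    {β : Fin M → ℝ | ∑ j : Fin M, ((j.1 : ℝ) + 1) * |β j - βstar j| ≤ γ} with hball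
  set B : Set (Fin M → ℝ) := BMset M (C + 1) with hB
  set U : Set (Fin M → ℝ) := {β : Fin M → ℝ | ∑ j : Fin M, ((j.1 : ℝ) + 1) * |β j| ≤ 1} with hU
  set v : ℝ≥0∞ := volume U with hv
  have hC1 : (0:ℝ) < C + 1 := by linarith
  have hn' : (1:ℝ) ≤ n := by exact_mod_cast hn
  have hγ1 : γ ≤ 1 := hγ'.trans (by rw [div_le_one (by linarith)]; linarith)
  have hv0 : v ≠ 0 := (vol_unit_pos M hM1).ne'
  have hvtop : v ≠ ⊤ := (vol_unit_lt_top M).ne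
  set jlast : Fin M := ⟨M - 1, Nat.sub_lt hM0 Nat.one_pos⟩ with hjlast
  -- volumes
  have hvolcball : volume {β : Fin M → ℝ | ∑ j : Fin M, ((j.1 : ℝ) + 1) * |β j| ≤ C + 1}
      = ENNReal.ofReal ((C+1)^M) * v := by
    have h := vol_wball M 0 (C+1) hC1
    simpa using h
  have hvolball : volume ball = ENNReal.ofReal (γ^M) * v := vol_wball M βstar γ hγ
  have hBsub : B ⊆ {β : Fin M → ℝ | ∑ j : Fin M, ((j.1 : ℝ) + 1) * |β j| ≤ C + 1} :=
    fun β hβ => hβ.1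
  have hcsubB : {β : Fin M → ℝ | ∑ j : Fin M, ((j.1 : ℝ) + 1) * |β j| ≤ C + 1}
      ⊆ B ∪ {β : Fin M → ℝ | β jlast = 0} := by
    intro β hβ
    by_cases h0 : β jlast = 0
    · exact Or.inr h0
    · exact Or.inl ⟨hβ, fun _ => h0⟩
  have hvolB : volume B = ENNReal.ofReal ((C+1)^M) * v := by
    refine le_antisymm ((measure_mono hBsub).trans_eq hvolcball) ?_
    calc ENNReal.ofReal ((C+1)^M) * v
        = volume {β : Fin M → ℝ | ∑ j : Fin M, ((j.1 : ℝ) + 1) * |β j| ≤ C + 1} :=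
          hvolcball.symm
      _ ≤ volume B + volume {β : Fin M → ℝ | β jlast = 0} :=
          (measure_mono hcsubB).trans (measure_union_le _ _)
      _ = volume B := by rw [vol_hyperplane M jlast, add_zero]
  have hvolB0 : volume B ≠ 0 := by
    rw [hvolB]; exact mul_ne_zero (ENNReal.ofReal_pos.2 (by positivity)).ne' hv0
  have hvolBtop : volume B ≠ ⊤ := by
    rw [hvolB]; exact ENNReal.mul_ne_top ENNReal.ofReal_ne_top hvtop
  have hballc : ball ⊆ {β : Fin M → ℝ | ∑ j : Fin M, ((j.1 : ℝ) + 1) * |β j| ≤ C + 1} := by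
    intro β hβ
    have key : ∀ j : Fin M, ((j.1 : ℝ) + 1) * |β j|
        ≤ ((j.1 : ℝ) + 1) * |β j - βstar j| + ((j.1 : ℝ) + 1) * |βstar j| := by
      intro j
      have h1 : |β j| ≤ |β j - βstar j| + |βstar j| := by
        have := abs_add_le (β j - βstar j) (βstar j)
        simpa [sub_add_cancel] using this
      nlinarith [(by positivity : (0:ℝ) ≤ (j.1:ℝ) + 1)]
    calc ∑ j : Fin M, ((j.1 : ℝ) + 1) * |β j|
        ≤ ∑ j : Fin M, (((j.1 : ℝ) + 1) * |β j - βstar j| + ((j.1 : ℝ) + 1) * |βstar j|) :=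
          Finset.sum_le_sum fun j _ => key j
      _ = (∑ j : Fin M, ((j.1 : ℝ) + 1) * |β j - βstar j|)
          + ∑ j : Fin M, ((j.1 : ℝ) + 1) * |βstar j| := Finset.sum_add_distrib
      _ ≤ γ + C := add_le_add hβ hβstarC
      _ ≤ C + 1 := by linarith
  have hballBsub : ball ⊆ (ball ∩ B) ∪ {β : Fin M → ℝ | β jlast = 0} := by
    intro β hβ
    by_cases h0 : β jlast = 0
    · exact Or.inr h0
    · exact Or.inl ⟨hβ, hballc hβ, fun _ => h0⟩
  have hvolballB : volume (ball ∩ B) = ENNReal.ofReal (γ^M) * v := by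
    refine le_antisymm ((measure_mono Set.inter_subset_left).trans_eq hvolball) ?_
    calc ENNReal.ofReal (γ^M) * v = volume ball := hvolball.symm
      _ ≤ volume (ball ∩ B) + volume {β : Fin M → ℝ | β jlast = 0} :=
          (measure_mono hballBsub).trans (measure_union_le _ _)
      _ = volume (ball ∩ B) := by rw [vol_hyperplane M jlast, add_zero]
  -- measurability
  have hballmeas : MeasurableSet ball := by
    have hcont : Continuous fun β : Fin M → ℝ => ∑ j : Fin M, ((j.1 : ℝ) + 1) * |β j - βstar j| :=
      continuous_finset_sum _ fun j _ =>
        continuous_const.mul (((continuous_apply j).sub continuous_const).abs)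
    exact (isClosed_le hcont continuous_const).measurableSet
  have hΦmeas : Measurable (PhiM φ M) :=
    measurable_pi_lambda _ fun t => Finset.measurable_sum _ fun j _ =>
      (measurable_pi_apply j).mul_const _
  obtain ⟨x, hLinj⟩ := exists_eval_inj φ M hΦinj
  set Llin : (Fin M → ℝ) →ₗ[ℝ] (Fin M → ℝ) :=
    LinearMap.pi (fun i => ∑ j : Fin M,
      (LinearMap.proj (R := ℝ) (φ := fun _ : Fin M => ℝ) j).smulRight (φ (j.1+1) (x i)))
    with hLlin
  have hLapp : ∀ β i, Llin β i = ∑ j : Fin M, β j * φ (j.1+1) (x i) := by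
    intro β i
    simp [hLlin, LinearMap.pi_apply, LinearMap.sum_apply, LinearMap.smulRight_apply,
      smul_eq_mul]
  have hLinj' : Function.Injective Llin := by
    intro a b hab
    apply hLinj
    funext i
    show (∑ j : Fin M, a j * φ (j.1+1) (x i)) = ∑ j : Fin M, b j * φ (j.1+1) (x i)
    rw [← hLapp a i, ← hLapp b i, hab]
  have hLsurj : Function.Surjective Llin := (LinearMap.injective_iff_surjective).1 hLinj'
  set Leq : (Fin M → ℝ) ≃ₗ[ℝ] (Fin M → ℝ) := LinearEquiv.ofBijective Llin ⟨hLinj', hLsurj⟩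
    with hLeq
  have hSLmeas : MeasurableSet ((Llin '' ball : Set (Fin M → ℝ))) := by
    have himg : Llin '' ball = Leq.symm ⁻¹' ball := by
      ext y
      constructor
      · rintro ⟨u, hu, rfl⟩
        show Leq.symm (Llin u) ∈ ball
        have : Llin u = Leq u := rfl
        rw [this, LinearEquiv.symm_apply_apply]
        exact hu
      · intro hy
        exact ⟨Leq.symm y, hy, Leq.apply_symm_apply y⟩
    rw [himg]
    exact (Leq.symm.toLinearMap.continuous_of_finiteDimensional).measurable hballmeas
  set ev : (ℝ → ℝ) → (Fin M → ℝ) := fun f i => f (x i) with hev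
  have hevmeas : Measurable ev := measurable_pi_lambda _ fun i => measurable_pi_apply _
  set S : Set (ℝ → ℝ) := ev ⁻¹' (Llin '' ball) with hS
  have hSmeas : MeasurableSet S := hevmeas hSLmeas
  have hevΦ : ∀ β, ev (PhiM φ M β) = Llin β := by
    intro β; funext i; rw [hLapp]; rfl
  have hΦS : PhiM φ M ⁻¹' S = ball := by
    ext β
    simp only [hS, Set.mem_preimage]
    rw [hevΦ β]
    constructor
    · rintro ⟨u, hu, huv⟩
      rwa [← hLinj' huv]
    · intro hβ; exact ⟨β, hβ, rfl⟩
  set A : Set (ℝ → ℝ) := PhiM φ M '' ball with hA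
  have hAS : A ⊆ S := by
    rintro _ ⟨β, hβ, rfl⟩
    show ev (PhiM φ M β) ∈ Llin '' ball
    rw [hevΦ]
    exact ⟨β, hβ, rfl⟩
  set μ0 : Measure (Fin M → ℝ) := (volume B)⁻¹ • volume.restrict B with hμ0
  set ν : Measure (ℝ → ℝ) := nuM φ M C with hνdef
  have hmap : ν = Measure.map (PhiM φ M) μ0 := rfl
  have hμ0app : ∀ s : Set (Fin M → ℝ), MeasurableSet s →
      μ0 s = (volume B)⁻¹ * volume (s ∩ B) := by
    intro s hs
    rw [hμ0, Measure.smul_apply, Measure.restrict_apply hs, smul_eq_mul]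
  have hνapp : ∀ t : Set (ℝ → ℝ), MeasurableSet t →
      ν t = (volume B)⁻¹ * volume (PhiM φ M ⁻¹' t ∩ B) := by
    intro t ht
    rw [hmap, Measure.map_apply hΦmeas ht, hμ0app _ (hΦmeas ht)]
  set bE : ℝ≥0∞ := ENNReal.ofReal ((γ/(C+1))^M) with hbE
  have hfrac : (volume B)⁻¹ * volume (ball ∩ B) = bE := by
    rw [hvolB, hvolballB, hbE]
    rw [ENNReal.mul_inv (Or.inl (ENNReal.ofReal_pos.2 (by positivity)).ne')
      (Or.inl ENNReal.ofReal_ne_top)]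
    have halg : (ENNReal.ofReal ((C+1)^M))⁻¹ * v⁻¹ * (ENNReal.ofReal (γ^M) * v)
        = (ENNReal.ofReal ((C+1)^M))⁻¹ * ENNReal.ofReal (γ^M) * (v⁻¹ * v) := by ring
    rw [halg, ENNReal.inv_mul_cancel hv0 hvtop, mul_one,
      ← ENNReal.ofReal_inv_of_pos (by positivity), ← ENNReal.ofReal_mul (by positivity)]
    congr 1
    rw [div_pow]
    field_simp
  have hbE0 : bE ≠ 0 := (ENNReal.ofReal_pos.2 (by positivity)).ne'
  have hbEtop : bE ≠ ⊤ := ENNReal.ofReal_ne_top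
  have hνS : ν S = bE := by rw [hνapp S hSmeas, hΦS, hfrac]
  have hνA : ν A = bE := by
    refine le_antisymm (hνS ▸ measure_mono hAS) ?_
    have h1 : μ0 (PhiM φ M ⁻¹' A) ≤ ν A := by
      rw [hmap]; exact Measure.le_map_apply hΦmeas.aemeasurable A
    have h2 : PhiM φ M ⁻¹' A = ball := Set.preimage_image_eq ball hΦinj
    rw [h2, hμ0app _ hballmeas, hfrac] at h1
    exact h1
  have hrestr : ν.restrict A = ν.restrict S := by
    refine Measure.ext fun t ht => ?_
    rw [Measure.restrict_apply ht, Measure.restrict_apply ht]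
    refine le_antisymm (measure_mono (Set.inter_subset_inter_right t hAS)) ?_
    have h1 : μ0 (PhiM φ M ⁻¹' (t ∩ A)) ≤ ν (t ∩ A) := by
      rw [hmap]; exact Measure.le_map_apply hΦmeas.aemeasurable _
    have h2 : PhiM φ M ⁻¹' (t ∩ A) = PhiM φ M ⁻¹' t ∩ ball := by
      rw [Set.preimage_inter, Set.preimage_image_eq ball hΦinj]
    have h3 : ν (t ∩ S) = μ0 (PhiM φ M ⁻¹' t ∩ ball) := by
      rw [hνapp _ (ht.inter hSmeas), Set.preimage_inter, hΦS,
        hμ0app _ ((hΦmeas ht).inter hballmeas)]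
    rw [h3]
    rw [h2] at h1
    exact h1
  haveI hνprob : IsProbabilityMeasure ν := ⟨by
    rw [hνapp Set.univ MeasurableSet.univ, Set.preimage_univ, Set.univ_inter,
      ENNReal.inv_mul_cancel hvolB0 hvolBtop]⟩
  set m : Measure (ℝ → ℝ) := (ν A)⁻¹ • ν.restrict A with hm
  have hm2 : m = bE⁻¹ • ν.restrict S := by rw [hm, hνA, hrestr]
  set f : (ℝ → ℝ) → ℝ≥0∞ := S.indicator (fun _ => bE⁻¹) with hf
  have hfmeas : Measurable f := measurable_const.indicator hSmeas
  have hmwd : m = ν.withDensity f := by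
    rw [hm2, hf, withDensity_indicator hSmeas, withDensity_const]
  have hac : m ≪ ν := hmwd ▸ withDensity_absolutelyContinuous ν f
  have hrn : m.rnDeriv ν =ᵐ[ν] f := by
    rw [hmwd]; exact Measure.rnDeriv_withDensity ν hfmeas
  have hmSc : m Sᶜ = 0 := by
    rw [hm2, Measure.smul_apply, Measure.restrict_apply hSmeas.compl,
      Set.compl_inter_self, measure_empty, smul_eq_mul, mul_zero]
  have haeS : ∀ᵐ y ∂m, y ∈ S := by
    rw [ae_iff]
    convert hmSc using 2
    rfl
  have hrn' : ∀ᵐ y ∂m, m.rnDeriv ν y = f y := hrn.filter_mono hac.ae_le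
  set cst : ℝ := Real.log ((bE⁻¹).toReal) with hcst
  have hllr : llr m ν =ᵐ[m] fun _ => cst := by
    filter_upwards [hrn', haeS] with y h1 h2
    have hy : llr m ν y = Real.log (m.rnDeriv ν y).toReal := rfl
    rw [hy, h1, hf, Set.indicator_of_mem h2]
  haveI hmprob : IsProbabilityMeasure m := ⟨by
    rw [hm2, Measure.smul_apply, Measure.restrict_apply MeasurableSet.univ,
      Set.univ_inter, hνS, smul_eq_mul, ENNReal.inv_mul_cancel hbE0 hbEtop]⟩
  have hint : Integrable (llr m ν) m := (integrable_const cst).congr hllr.symm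
  have hintval : ∫ y, llr m ν y ∂m = cst := by
    rw [integral_congr_ae hllr, integral_const]
    simp [measure_univ]
  have hcstval : cst = (M:ℝ) * Real.log ((C + 1) / γ) := by
    rw [hcst, hbE, ENNReal.toReal_inv, ENNReal.toReal_ofReal (by positivity),
      ← inv_pow, inv_div, Real.log_pow]
  simp only [klDivE]
  rw [if_pos ⟨hac, hint⟩, hintval, hcstval]
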